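/- Let γ ≥ 0 and n ≥ 1 be integers, and suppose integers c₀, c₁, …, c_q and nonnegative integers r₀, …, r_{q−1} satisfy c₀ = 0, r_p = 2γ − 2 + c_{p+1} − c_p for 0 ≤ p ≤ q−1, c_q ≤ 0, and 2q ≤ n+1. Then r₀ ≤ (n+1)(γ − 1). -/
import Mathlib


/-- Telescoping argument for Case (A) of the branching bound: with `c₀ = 0`,
`r_p = 2γ − 2 + c_{p+1} − c_p` and `r_p ≥ 0` for `p < q`, `c_q ≤ 0` and `2q ≤ n + 1`,
one gets `r₀ ≤ (n+1)(γ−1)`. -/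
theorem stmt_5 (γ n : ℤ) (hγ : 0 ≤ γ) (hn : 1 ≤ n) (q : ℕ) (hq : 1 ≤ q)
    (c : ℕ → ℤ) (r : ℕ → ℤ) (hc0 : c 0 = 0)
    (hr : ∀ p < q, r p = 2 * γ - 2 + c (p + 1) - c p)
    (hrpos : ∀ p < q, 0 ≤ r p)
    (hcq : c q ≤ 0) (hqn : 2 * (q : ℤ) ≤ n + 1) :
    r 0 ≤ (n + 1) * (γ - 1) := by
  -- key telescoping inequality
  have key : ∀ k, 1 ≤ k → k ≤ q → r 0 + (k : ℤ) * (2 - 2 * γ) ≤ c k := by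
    intro k
    induction k with
    | zero => omega
    | succ m ih =>
      intro _ hle
      rcases Nat.eq_zero_or_pos m with hm | hm
      · subst hm
        have h0 := hr 0 (by omega)
        rw [hc0] at h0
        push_cast
        linarith
      · have hstep := hr m (by omega)
        have hpos := hrpos m (by omega)
        have := ih hm (by omega)
        push_cast
        push_cast at this
        linarith
  have hkey := key q hq le_rfl
  have hr0 : 0 ≤ r 0 := hrpos 0 (by omega)
  have hq1 : (1 : ℤ) ≤ (q : ℤ) := by exact_mod_cast hq
  -- deduce γ ≥ 1
  have hγ1 : 1 ≤ γ := by nlinarith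
  -- r 0 ≤ 2q(γ−1) ≤ (n+1)(γ−1)
  nlinarith [mul_le_mul_of_nonneg_right hqn (sub_nonneg.mpr hγ1)]
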